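/- Let ω = e^{2πi/3} and A₀ = diag(1, ω, ω²) ∈ gl(3,ℂ), a complex symmetric traceless matrix. Consider the action of U(1) × SO(3) on such matrices given by (e^{iφ}, R) · A = e^{iφ} R A R⁻¹. Then the stabilizer of A₀ consists of exactly the 12 elements (1, diag(ε₁,ε₂,ε₃)), (ω, P) with P the signed cyclic permutation matrix sending (x₁,x₂,x₃) to (ε₁x₃, ε₂x₁, ε₃x₂), and (ω², Q) with Q the signed cyclic permutation matrix sending (x₁,x₂,x₃) to (ε₁x₂, ε₂x₃, ε₃x₁), where in each case ε₁, ε₂, ε₃ ∈ {±1} and ε₁ε₂ε₃ = 1; moreover this stabilizer is isomorphic, as a group, to the alternating group on 4 letters. -/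

import Mathlib

open Matrix

noncomputable section

abbrev M3R : Type := Matrix (Fin 3) (Fin 3) ℝ
abbrev M3C : Type := Matrix (Fin 3) (Fin 3) ℂ

def isSO3 (R : M3R) : Prop := R * Rᵀ = 1 ∧ R.det = 1

def toC (R : M3R) : M3C := R.map (fun x => (x : ℂ))

/-- `ω = e^{2πi/3}`. -/
def ω : ℂ := Complex.exp (2 * Real.pi * Complex.I / 3)

/-- `A₀ = diag(1, ω, ω²)`. -/
def A0 : M3C := !![1, 0, 0; 0, ω, 0; 0, 0, ω ^ 2]

/-- The stabilizer of `A₀` in `U(1) × SO(3)` for the action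
`(e^{iφ}, R) · A = e^{iφ} R A R⁻¹`. -/
def Stab : Set (ℂ × M3R) :=
  {g | (‖g.1‖ = 1 ∧ isSO3 g.2) ∧ g.1 • (toC g.2 * A0 * (toC g.2)⁻¹) = A0}

/- ### auxiliary lemmas about ω -/

lemma hω3 : ω ^ 3 = 1 := by
  rw [ω, ← Complex.exp_nat_mul]
  have : (3:ℕ) * (2 * (Real.pi:ℂ) * Complex.I / 3) = 2 * Real.pi * Complex.I := by
    push_cast; ring
  rw [this, Complex.exp_two_pi_mul_I]

lemma hωeq : ω = Complex.exp ((2 * Real.pi / 3 : ℝ) * Complex.I) := by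
  rw [ω]; push_cast; ring_nf

lemma hω_im : ω.im = Real.sin (2 * Real.pi / 3) := by
  rw [hωeq, Complex.exp_ofReal_mul_I_im]

lemma hω2_im : (ω^2).im = Real.sin (2 * (2 * Real.pi / 3)) := by
  rw [hωeq, ← Complex.exp_nat_mul,
    show ((2:ℕ):ℂ) * ((2 * Real.pi / 3 : ℝ) * Complex.I)
      = ((2 * (2 * Real.pi / 3) : ℝ) * Complex.I) by push_cast; ring,
    Complex.exp_ofReal_mul_I_im]

lemma hω_norm : ‖ω‖ = 1 := by
  rw [hωeq, Complex.norm_exp_ofReal_mul_I]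

lemma sin1_pos : 0 < Real.sin (2 * Real.pi / 3) := by
  apply Real.sin_pos_of_pos_of_lt_pi <;> nlinarith [Real.pi_pos, Real.pi_gt_three]

lemma sin2_neg : Real.sin (2 * (2 * Real.pi / 3)) < 0 := by
  have hp := Real.pi_pos
  have h3 := Real.pi_gt_three
  have h : Real.sin (2 * (2 * Real.pi / 3)) = -Real.sin (Real.pi / 3) := by
    rw [show 2 * (2 * Real.pi / 3) = Real.pi / 3 + Real.pi by ring, Real.sin_add_pi]
  rw [h, neg_lt, neg_zero]
  apply Real.sin_pos_of_pos_of_lt_pi <;> nlinarith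

lemma hω_ne_one : ω ≠ 1 := fun h => by
  have := hω_im; rw [h] at this; simp at this; nlinarith [sin1_pos]

lemma hω2_ne_one : ω ^ 2 ≠ 1 := fun h => by
  have := hω2_im; rw [h] at this; simp at this; nlinarith [sin2_neg]

lemma hω_ne_ω2 : ω ≠ ω ^ 2 := fun h => by
  have h1 := hω_im; have h2 := hω2_im
  rw [h, h2] at h1; nlinarith [sin1_pos, sin2_neg]

lemma hω_ne_zero : ω ≠ 0 := by
  intro h
  have := hω3
  rw [h] at this; norm_num at this

/- ### the parameter group -/

abbrev P : Type := ZMod 3 × ZMod 2 × ZMod 2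

/-- sign corresponding to a `ZMod 2` element -/
def sg (x : ZMod 2) : ℝ := if x = 0 then 1 else -1

lemma zmod2_cases : ∀ x : ZMod 2, x = 0 ∨ x = 1 := by decide

lemma sg_add (x y : ZMod 2) : sg (x + y) = sg x * sg y := by
  rcases zmod2_cases x with rfl|rfl <;> rcases zmod2_cases y with rfl|rfl <;> simp [sg] <;> first | rfl | (norm_num; decide)

lemma sg_mul_self (x : ZMod 2) : sg x * sg x = 1 := by
  rcases zmod2_cases x with rfl|rfl <;> norm_num [sg]

lemma sg_sq (x : ZMod 2) : sg x ^ 2 = 1 := by fin_cases x <;> norm_num [sg]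

lemma zmod3_cases : ∀ x : ZMod 3, x = 0 ∨ x = 1 ∨ x = 2 := by decide

lemma sg_one_or (x : ZMod 2) : sg x = 1 ∨ sg x = -1 := by
  rcases zmod2_cases x with rfl|rfl <;> simp [sg]

/-- lookup of the sign triple `(a, b, a+b)` -/
def eps (a b : ZMod 2) : ZMod 3 → ZMod 2 := fun i =>
  if i = 0 then a else if i = 1 then b else a + b

/-- multiplication on the parameter set, matching the stabilizer -/
def pmul (p q : P) : P :=
  (p.1 + q.1, p.2.1 + eps q.2.1 q.2.2 (0 - p.1), p.2.2 + eps q.2.1 q.2.2 (1 - p.1))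

/-- the rotation matrix of a parameter -/
def Rm (d : ZMod 3) (a b : ZMod 2) : M3R :=
  if d = 0 then !![sg a, 0, 0; 0, sg b, 0; 0, 0, sg (a + b)]
  else if d = 1 then !![0, 0, sg a; sg b, 0, 0; 0, sg (a + b), 0]
  else !![0, sg a, 0; 0, 0, sg b; sg (a + b), 0, 0]

/-- the stabilizer element of a parameter -/
def E (p : P) : ℂ × M3R := (ω ^ p.1.val, Rm p.1 p.2.1 p.2.2)

lemma toC_mul (A B : M3R) : toC (A * B) = toC A * toC B := by
  have : toC (A*B) = (A*B).map (Complex.ofRealHom) := rfl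
  rw [this, Matrix.map_mul]; rfl

lemma toC_one : toC 1 = 1 := by
  ext i j
  simp [toC, Matrix.one_apply]
  split <;> simp

lemma ω_pow_mod (n : ℕ) : ω ^ n = ω ^ (n % 3) := by
  conv_lhs => rw [← Nat.div_add_mod n 3]
  rw [pow_add, pow_mul, hω3, one_pow, one_mul]

lemma pow_val_add (d d' : ZMod 3) : ω ^ (d + d').val = ω ^ d.val * ω ^ d'.val := by
  rw [ZMod.val_add, ← ω_pow_mod, pow_add]

lemma Rm0 (a b : ZMod 2) :
    Rm 0 a b = !![sg a, 0, 0; 0, sg b, 0; 0, 0, sg (a+b)] := by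
  simp [Rm]

lemma Rm1 (a b : ZMod 2) :
    Rm 1 a b = !![0, 0, sg a; sg b, 0, 0; 0, sg (a+b), 0] := by
  rw [Rm, if_neg (by decide), if_pos rfl]

lemma Rm2 (a b : ZMod 2) :
    Rm 2 a b = !![0, sg a, 0; 0, 0, sg b; sg (a+b), 0, 0] := by
  rw [Rm, if_neg (by decide), if_neg (by decide)]

lemma pmul0 (a b : ZMod 2) (q : P) :
    pmul (0, a, b) q = (q.1, a + q.2.1, b + q.2.2) := by
  simp [pmul, eps]

lemma pmul1 (a b : ZMod 2) (q : P) :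
    pmul (1, a, b) q = (1 + q.1, a + (q.2.1 + q.2.2), b + q.2.1) := by
  rw [pmul]
  simp only [eps, if_neg (show (0:ZMod 3) - 1 ≠ 0 by decide),
    if_neg (show (0:ZMod 3) - 1 ≠ 1 by decide), if_neg (show (1:ZMod 3) - 1 ≠ 1 by decide),
    if_pos (show (1:ZMod 3) - 1 = 0 from by decide)]

lemma pmul2 (a b : ZMod 2) (q : P) :
    pmul (2, a, b) q = (2 + q.1, a + q.2.2, b + (q.2.1 + q.2.2)) := by
  rw [pmul]
  simp only [eps, if_neg (show (0:ZMod 3) - 2 ≠ 0 by decide),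
    if_pos (show (0:ZMod 3) - 2 = 1 from by decide),
    if_neg (show (1:ZMod 3) - 2 ≠ 0 by decide), if_neg (show (1:ZMod 3) - 2 ≠ 1 by decide)]

lemma E_mul (p q : P) : E (pmul p q) = E p * E q := by
  obtain ⟨d, a, b⟩ := p
  obtain ⟨d', a', b'⟩ := q
  refine Prod.ext ?_ ?_
  · show ω ^ (d + d').val = ω ^ d.val * ω ^ d'.val
    exact pow_val_add d d'
  show Rm (pmul (d,a,b) (d',a',b')).1 (pmul (d,a,b) (d',a',b')).2.1 (pmul (d,a,b) (d',a',b')).2.2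
      = Rm d a b * Rm d' a' b'
  rcases zmod3_cases d with h|h|h <;> subst h <;>
  rcases zmod3_cases d' with h|h|h <;> subst h <;>
  [rw [pmul0]; rw [pmul0]; rw [pmul0]; rw [pmul1]; rw [pmul1]; rw [pmul1];
   rw [pmul2]; rw [pmul2]; rw [pmul2]] <;>
    simp only [show ((0:ZMod 3)+0 : ZMod 3) = 0 from rfl, show ((0:ZMod 3)+1 : ZMod 3) = 1 from rfl,
      show ((0:ZMod 3)+2 : ZMod 3) = 2 from rfl, show ((1:ZMod 3)+0 : ZMod 3) = 1 from rfl,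
      show ((1:ZMod 3)+1 : ZMod 3) = 2 from rfl, show ((1:ZMod 3)+2 : ZMod 3) = 0 from by decide,
      show ((2:ZMod 3)+0 : ZMod 3) = 2 from rfl, show ((2:ZMod 3)+1 : ZMod 3) = 0 from by decide,
      show ((2:ZMod 3)+2 : ZMod 3) = 1 from by decide,
      Rm0, Rm1, Rm2, Matrix.mul_fin_three, sg_add] <;>
    norm_num <;> ring_nf <;>
    simp [sg_mul_self, sg_sq, mul_comm, mul_assoc, mul_left_comm]

def lam : Fin 3 → ℂ := ![1, ω, ω ^ 2]

lemma trans_lit (a b c d e f g h k : ℝ) :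
    (!![a, b, c; d, e, f; g, h, k])ᵀ = !![a, d, g; b, e, h; c, f, k] := by
  ext x y; fin_cases x <;> fin_cases y <;> simp

lemma A0_diag : A0 = Matrix.diagonal lam := by
  ext i j
  fin_cases i <;> fin_cases j <;>
    simp [A0, lam, Matrix.diagonal, Matrix.vecHead, Matrix.vecTail]

lemma lam_ne_zero : ∀ j, lam j ≠ 0 := by
  intro j
  fin_cases j <;>
    simp [lam, hω_ne_zero, pow_ne_zero]

lemma sg_inj : ∀ x y : ZMod 2, sg x = sg y → x = y := by
  intro x y
  rcases zmod2_cases x with rfl|rfl <;> rcases zmod2_cases y with rfl|rfl <;> simp [sg] <;> norm_num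

lemma hω4 : ω ^ 4 = ω := by
  rw [show (4:ℕ) = 3 + 1 from rfl, pow_succ, hω3, one_mul]

lemma pow_val_inj (d d' : ZMod 3) (h : ω ^ d.val = ω ^ d'.val) : d = d' := by
  rcases zmod3_cases d with rfl|rfl|rfl <;> rcases zmod3_cases d' with rfl|rfl|rfl <;>
    first
    | rfl
    | (exfalso
       simp only [show ((0:ZMod 3)).val = 0 from rfl, show ((1:ZMod 3)).val = 1 from rfl,
         show ((2:ZMod 3)).val = 2 from rfl, pow_zero, pow_one] at h
       first
       | exact hω_ne_one h.symm
       | exact hω_ne_one h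
       | exact hω2_ne_one h.symm
       | exact hω2_ne_one h
       | exact hω_ne_ω2 h
       | exact hω_ne_ω2 h.symm)

lemma E_inj : Function.Injective E := by
  rintro ⟨d, a, b⟩ ⟨d', a', b'⟩ h
  have h1 : ω ^ d.val = ω ^ d'.val := congrArg Prod.fst h
  have hd : d = d' := pow_val_inj d d' h1
  subst hd
  have h2 : Rm d a b = Rm d a' b' := congrArg Prod.snd h
  rcases zmod3_cases d with rfl|rfl|rfl <;>
    [rw [Rm0, Rm0] at h2; rw [Rm1, Rm1] at h2; rw [Rm2, Rm2] at h2] <;>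
    · have ha : sg a = sg a' := by
        first
        | (simpa using congrFun (congrFun h2 0) 0)
        | (simpa using congrFun (congrFun h2 0) 2)
        | (simpa using congrFun (congrFun h2 0) 1)
      have hb : sg b = sg b' := by
        first
        | (simpa using congrFun (congrFun h2 1) 1)
        | (simpa using congrFun (congrFun h2 1) 0)
        | (simpa using congrFun (congrFun h2 1) 2)
      rw [sg_inj _ _ ha, sg_inj _ _ hb]

lemma E_mem_Stab (p : P) : E p ∈ Stab := by
  obtain ⟨d, a, b⟩ := p
  have hRRt : Rm d a b * (Rm d a b)ᵀ = 1 := by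
    rcases zmod3_cases d with rfl|rfl|rfl <;> [rw [Rm0]; rw [Rm1]; rw [Rm2]] <;>
      · rw [trans_lit, Matrix.mul_fin_three, Matrix.one_fin_three]
        norm_num [sg_mul_self]
  have hdet : (Rm d a b).det = 1 := by
    rcases zmod3_cases d with rfl|rfl|rfl <;> [rw [Rm0]; rw [Rm1]; rw [Rm2]] <;>
      · rw [Matrix.det_fin_three]
        simp [sg_add]
        nlinarith [sg_mul_self a, sg_mul_self b]
  refine ⟨⟨by show ‖ω ^ d.val‖ = 1; rw [norm_pow, hω_norm, one_pow], hRRt, hdet⟩, ?_⟩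
  have hTt : toC (Rm d a b) * toC ((Rm d a b)ᵀ) = 1 := by
    rw [← toC_mul, hRRt, toC_one]
  have hinv : (toC (Rm d a b))⁻¹ = toC ((Rm d a b)ᵀ) := inv_eq_right_inv hTt
  show (ω ^ d.val) • (toC (Rm d a b) * A0 * (toC (Rm d a b))⁻¹) = A0
  rw [hinv]
  have key : (ω ^ d.val) • (toC (Rm d a b) * A0) = A0 * toC (Rm d a b) := by
    rcases zmod3_cases d with rfl|rfl|rfl <;> [rw [Rm0]; rw [Rm1]; rw [Rm2]] <;>
      · ext i j
        fin_cases i <;> fin_cases j <;>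
          simp [toC, A0, Matrix.mul_apply, Fin.sum_univ_three, Matrix.smul_apply,
            smul_eq_mul, ZMod.val, Matrix.vecHead, Matrix.vecTail,
              show @Fin.val 3 (0 : ZMod 3) = 0 from rfl, show @Fin.val 3 (1 : ZMod 3) = 1 from rfl,
              show @Fin.val 3 (2 : ZMod 3) = 2 from rfl] <;>
          first
          | ring1
          | linear_combination (sg a : ℂ) * hω3
          | linear_combination ((sg b : ℂ) * ω) * hω3
          | linear_combination ((sg (a+b) : ℂ) * ω) * hω3
  calc (ω ^ d.val) • (toC (Rm d a b) * A0 * toC ((Rm d a b)ᵀ))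
      = ((ω ^ d.val) • (toC (Rm d a b) * A0)) * toC ((Rm d a b)ᵀ) := by
        rw [Matrix.smul_mul]
    _ = A0 * toC (Rm d a b) * toC ((Rm d a b)ᵀ) := by rw [key]
    _ = A0 := by rw [mul_assoc, hTt, mul_one]

def S : Set (ℂ × M3R) :=
      {g : ℂ × M3R | ∃ ε₁ ε₂ ε₃ : ℝ,
        (ε₁ = 1 ∨ ε₁ = -1) ∧ (ε₂ = 1 ∨ ε₂ = -1) ∧ (ε₃ = 1 ∨ ε₃ = -1) ∧
        ε₁ * ε₂ * ε₃ = 1 ∧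
        (g = (1, !![ε₁, 0, 0; 0, ε₂, 0; 0, 0, ε₃]) ∨
         g = (ω, !![0, 0, ε₁; ε₂, 0, 0; 0, ε₃, 0]) ∨
         g = (ω ^ 2, !![0, ε₁, 0; 0, 0, ε₂; ε₃, 0, 0]))}

lemma lam0 : lam 0 = 1 := rfl
lemma lam1 : lam 1 = ω := rfl
lemma lam2 : lam 2 = ω ^ 2 := rfl

lemma Stab_sub_S : Stab ⊆ S := by
  rintro ⟨c, R⟩ ⟨⟨hnorm, hRRt, hdet⟩, hA⟩
  have hTt : toC R * toC Rᵀ = 1 := by rw [← toC_mul, hRRt, toC_one]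
  have hTtT : toC Rᵀ * toC R = 1 := mul_eq_one_comm.mp hTt
  have hinv : (toC R)⁻¹ = toC Rᵀ := inv_eq_right_inv hTt
  rw [show ((c, R) : ℂ × M3R).1 = c from rfl] at hA
  rw [show ((c, R) : ℂ × M3R).2 = R from rfl] at hA
  rw [hinv] at hA
  have hA' : c • (toC R * A0) = A0 * toC R := by
    have h := congrArg (fun M => M * toC R) hA
    simp only [Matrix.smul_mul, mul_assoc, hTtT, mul_one] at h
    exact h
  have key : ∀ i j, c * (((R i j : ℝ) : ℂ) * lam j) = lam i * ((R i j : ℝ) : ℂ) := by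
    intro i j
    have h := congrFun (congrFun hA' i) j
    rw [A0_diag] at h
    simpa [Matrix.mul_diagonal, Matrix.diagonal_mul, Matrix.smul_apply, smul_eq_mul, toC]
      using h
  have keyne : ∀ i j, R i j ≠ 0 → c * lam j = lam i := by
    intro i j hne
    have hc0 : ((R i j : ℝ) : ℂ) ≠ 0 := by exact_mod_cast hne
    have h2 : (c * lam j) * ((R i j : ℝ) : ℂ) = lam i * ((R i j : ℝ) : ℂ) := by
      linear_combination key i j
    exact mul_right_cancel₀ hc0 h2
  have hs : ∀ i, R i 0 * R i 0 + R i 1 * R i 1 + R i 2 * R i 2 = 1 := by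
    intro i
    have h := congrFun (congrFun hRRt i) i
    simpa [Matrix.mul_apply, Matrix.transpose_apply, Fin.sum_univ_three, Matrix.one_apply]
      using h
  have hrow0 : R 0 0 ≠ 0 ∨ R 0 1 ≠ 0 ∨ R 0 2 ≠ 0 := by
    by_contra hcon
    push_neg at hcon
    obtain ⟨h0, h1, h2⟩ := hcon
    have h3 := hs 0
    rw [h0, h1, h2] at h3
    norm_num at h3
  have hdet3 : det R = 1 := hdet
  rw [Matrix.det_fin_three] at hdet3
  rcases hrow0 with hr|hr|hr
  · -- c = 1, diagonal case
    have hc : c = 1 := by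
      have h := keyne 0 0 hr
      simp only [lam0, lam1, lam2, one_mul, mul_one] at h
      exact h
    have z01 : R 0 1 = 0 := by
      by_contra hne; have h := keyne 0 1 hne; rw [hc] at h; simp only [lam0, lam1, lam2, one_mul, mul_one] at h
      exact hω_ne_one h
    have z02 : R 0 2 = 0 := by
      by_contra hne; have h := keyne 0 2 hne; rw [hc] at h; simp only [lam0, lam1, lam2, one_mul, mul_one] at h
      exact hω2_ne_one h
    have z10 : R 1 0 = 0 := by
      by_contra hne; have h := keyne 1 0 hne; rw [hc] at h; simp only [lam0, lam1, lam2, one_mul, mul_one] at h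
      exact hω_ne_one h.symm
    have z12 : R 1 2 = 0 := by
      by_contra hne; have h := keyne 1 2 hne; rw [hc] at h; simp only [lam0, lam1, lam2, one_mul, mul_one] at h
      exact hω_ne_ω2 h.symm
    have z20 : R 2 0 = 0 := by
      by_contra hne; have h := keyne 2 0 hne; rw [hc] at h; simp only [lam0, lam1, lam2, one_mul, mul_one] at h
      exact hω2_ne_one h.symm
    have z21 : R 2 1 = 0 := by
      by_contra hne; have h := keyne 2 1 hne; rw [hc] at h; simp only [lam0, lam1, lam2, one_mul, mul_one] at h
      exact hω_ne_ω2 h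
    have e0 : R 0 0 = 1 ∨ R 0 0 = -1 := by
      apply mul_self_eq_one_iff.mp
      have h3 := hs 0; rw [z01, z02] at h3; linarith
    have e1 : R 1 1 = 1 ∨ R 1 1 = -1 := by
      apply mul_self_eq_one_iff.mp
      have h3 := hs 1; rw [z10, z12] at h3; linarith
    have e2 : R 2 2 = 1 ∨ R 2 2 = -1 := by
      apply mul_self_eq_one_iff.mp
      have h3 := hs 2; rw [z20, z21] at h3; linarith
    refine ⟨R 0 0, R 1 1, R 2 2, e0, e1, e2, ?_, Or.inl ?_⟩
    · rw [z01, z02, z10, z12, z20, z21] at hdet3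
      linear_combination hdet3
    · rw [hc]
      refine Prod.ext rfl ?_
      show R = _
      ext i j
      fin_cases i <;> fin_cases j <;>
        simp [Matrix.vecHead, Matrix.vecTail, z01, z02, z10, z12, z20, z21]
  · -- c = ω^2 case
    have h1 : c * ω = 1 := by
      have h := keyne 0 1 hr
      simp only [lam0, lam1, lam2, one_mul, mul_one] at h
      exact h
    have hc : c = ω ^ 2 := by linear_combination ω ^ 2 * h1 - c * hω3
    have z00 : R 0 0 = 0 := by
      by_contra hne; have h := keyne 0 0 hne; rw [hc] at h; simp only [lam0, lam1, lam2, one_mul, mul_one] at h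
      exact hω2_ne_one h
    have z10 : R 1 0 = 0 := by
      by_contra hne; have h := keyne 1 0 hne; rw [hc] at h; simp only [lam0, lam1, lam2, one_mul, mul_one] at h
      exact hω_ne_ω2 h.symm
    have z11 : R 1 1 = 0 := by
      by_contra hne; have h := keyne 1 1 hne; rw [hc] at h; simp only [lam0, lam1, lam2, one_mul, mul_one] at h
      exact hω2_ne_one (mul_right_cancel₀ hω_ne_zero (h.trans (one_mul ω).symm))
    have z21 : R 2 1 = 0 := by
      by_contra hne; have h := keyne 2 1 hne; rw [hc] at h; simp only [lam0, lam1, lam2, one_mul, mul_one] at h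
      exact hω2_ne_one (by linear_combination hω3 - h)
    have z02 : R 0 2 = 0 := by
      by_contra hne; have h := keyne 0 2 hne; rw [hc] at h; simp only [lam0, lam1, lam2, one_mul, mul_one] at h
      exact hω_ne_one (by linear_combination h - hω4)
    have z22 : R 2 2 = 0 := by
      by_contra hne; have h := keyne 2 2 hne; rw [hc] at h; simp only [lam0, lam1, lam2, one_mul, mul_one] at h
      exact hω_ne_ω2 (by linear_combination h - hω4)
    have e0 : R 0 1 = 1 ∨ R 0 1 = -1 := by
      apply mul_self_eq_one_iff.mp
      have h3 := hs 0; rw [z00, z02] at h3; linarith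
    have e1 : R 1 2 = 1 ∨ R 1 2 = -1 := by
      apply mul_self_eq_one_iff.mp
      have h3 := hs 1; rw [z10, z11] at h3; linarith
    have e2 : R 2 0 = 1 ∨ R 2 0 = -1 := by
      apply mul_self_eq_one_iff.mp
      have h3 := hs 2; rw [z21, z22] at h3; linarith
    refine ⟨R 0 1, R 1 2, R 2 0, e0, e1, e2, ?_, Or.inr (Or.inr ?_)⟩
    · rw [z00, z10, z11, z21, z02, z22] at hdet3
      linear_combination hdet3
    · rw [hc]
      refine Prod.ext rfl ?_
      show R = _
      ext i j
      fin_cases i <;> fin_cases j <;>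
        simp [Matrix.vecHead, Matrix.vecTail, z00, z10, z11, z21, z02, z22]
  · -- c = ω case
    have h1 : c * ω ^ 2 = 1 := by
      have h := keyne 0 2 hr
      simp only [lam0, lam1, lam2, one_mul, mul_one] at h
      exact h
    have hc : c = ω := by linear_combination ω * h1 - c * hω3
    have z00 : R 0 0 = 0 := by
      by_contra hne; have h := keyne 0 0 hne; rw [hc] at h; simp only [lam0, lam1, lam2, one_mul, mul_one] at h
      exact hω_ne_one h
    have z20 : R 2 0 = 0 := by
      by_contra hne; have h := keyne 2 0 hne; rw [hc] at h; simp only [lam0, lam1, lam2, one_mul, mul_one] at h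
      exact hω_ne_ω2 h
    have z01 : R 0 1 = 0 := by
      by_contra hne; have h := keyne 0 1 hne; rw [hc] at h; simp only [lam0, lam1, lam2, one_mul, mul_one] at h
      exact hω2_ne_one (by linear_combination h)
    have z11 : R 1 1 = 0 := by
      by_contra hne; have h := keyne 1 1 hne; rw [hc] at h; simp only [lam0, lam1, lam2, one_mul, mul_one] at h
      exact hω_ne_one (mul_right_cancel₀ hω_ne_zero (h.trans (one_mul ω).symm))
    have z12 : R 1 2 = 0 := by
      by_contra hne; have h := keyne 1 2 hne; rw [hc] at h; simp only [lam0, lam1, lam2, one_mul, mul_one] at h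
      exact hω_ne_one (by linear_combination hω3 - h)
    have z22 : R 2 2 = 0 := by
      by_contra hne; have h := keyne 2 2 hne; rw [hc] at h; simp only [lam0, lam1, lam2, one_mul, mul_one] at h
      exact hω_ne_one
        (mul_right_cancel₀ (pow_ne_zero 2 hω_ne_zero) (h.trans (one_mul (ω ^ 2)).symm))
    have e0 : R 0 2 = 1 ∨ R 0 2 = -1 := by
      apply mul_self_eq_one_iff.mp
      have h3 := hs 0; rw [z00, z01] at h3; linarith
    have e1 : R 1 0 = 1 ∨ R 1 0 = -1 := by
      apply mul_self_eq_one_iff.mp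
      have h3 := hs 1; rw [z11, z12] at h3; linarith
    have e2 : R 2 1 = 1 ∨ R 2 1 = -1 := by
      apply mul_self_eq_one_iff.mp
      have h3 := hs 2; rw [z20, z22] at h3; linarith
    refine ⟨R 0 2, R 1 0, R 2 1, e0, e1, e2, ?_, Or.inr (Or.inl ?_)⟩
    · rw [z00, z20, z01, z11, z12, z22] at hdet3
      linear_combination hdet3
    · rw [hc]
      refine Prod.ext rfl ?_
      show R = _
      ext i j
      fin_cases i <;> fin_cases j <;>
        simp [Matrix.vecHead, Matrix.vecTail, z00, z20, z01, z11, z12, z22]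

lemma S_sub_range : S ⊆ Set.range E := by
  rintro g ⟨ε₁, ε₂, ε₃, h1, h2, h3, hprod, hg⟩
  have hε3 : ε₃ = ε₁ * ε₂ := by
    rcases h1 with rfl|rfl <;> rcases h2 with rfl|rfl <;> rcases h3 with rfl|rfl <;>
      norm_num at *
  subst hε3
  set a : ZMod 2 := if ε₁ = 1 then 0 else 1 with ha
  set b : ZMod 2 := if ε₂ = 1 then 0 else 1 with hb
  have hsa : sg a = ε₁ := by
    rcases h1 with rfl|rfl <;> norm_num [ha, sg]
  have hsb : sg b = ε₂ := by
    rcases h2 with rfl|rfl <;> norm_num [hb, sg]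
  have hsab : sg (a + b) = ε₁ * ε₂ := by rw [sg_add, hsa, hsb]
  rcases hg with rfl|rfl|rfl
  · exact ⟨(0, a, b), by
      refine Prod.ext ?_ ?_
      · show ω ^ (0 : ZMod 3).val = 1
        norm_num
      · show Rm 0 a b = _
        rw [Rm0, hsa, hsb, hsab]⟩
  · exact ⟨(1, a, b), by
      refine Prod.ext ?_ ?_
      · show ω ^ (1 : ZMod 3).val = ω
        rw [show ((1 : ZMod 3)).val = 1 from rfl, pow_one]
      · show Rm 1 a b = _
        rw [Rm1, hsa, hsb, hsab]⟩
  · exact ⟨(2, a, b), by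
      refine Prod.ext ?_ ?_
      · show ω ^ (2 : ZMod 3).val = ω ^ 2
        rw [show ((2 : ZMod 3)).val = 2 from rfl]
      · show Rm 2 a b = _
        rw [Rm2, hsa, hsb, hsab]⟩

lemma range_sub_Stab : Set.range E ⊆ Stab := fun _ ⟨p, hp⟩ => hp ▸ E_mem_Stab p

lemma Stab_eq_S : Stab = S :=
  le_antisymm Stab_sub_S (fun g hg => range_sub_Stab (S_sub_range hg))

lemma Stab_eq_range : Stab = Set.range E :=
  le_antisymm (fun g hg => S_sub_range (Stab_sub_S hg)) range_sub_Stab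

/- ### the map to A4 -/

def tperm : Equiv.Perm (Fin 4) := Equiv.swap 0 1 * Equiv.swap 1 2
def xperm : Equiv.Perm (Fin 4) := Equiv.swap 0 1 * Equiv.swap 2 3
def yperm : Equiv.Perm (Fin 4) := Equiv.swap 0 2 * Equiv.swap 1 3
def zperm : Equiv.Perm (Fin 4) := Equiv.swap 0 3 * Equiv.swap 1 2

def vperm (a b : ZMod 2) : Equiv.Perm (Fin 4) :=
  if a = 0 then (if b = 0 then 1 else yperm) else (if b = 0 then xperm else zperm)

def φ (p : P) : Equiv.Perm (Fin 4) := vperm p.2.1 p.2.2 * tperm ^ p.1.val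

lemma φ_mem (p : P) : φ p ∈ alternatingGroup (Fin 4) := by
  rw [Equiv.Perm.mem_alternatingGroup]
  revert p; decide

lemma φ_mul (p q : P) : φ (pmul p q) = φ p * φ q := by revert p q; decide

def ψ (p : P) : ↥(alternatingGroup (Fin 4)) := ⟨φ p, φ_mem p⟩

lemma ψ_bij : Function.Bijective ψ := by decide

/- ### main theorem -/

/-- The stabilizer of `A₀ = diag(1, ω, ω²)` consists of exactly the 12 signed
(cyclic) permutation elements with `ε₁ε₂ε₃ = 1`, and it is isomorphic, as a group,
to the alternating group on 4 letters. -/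
theorem stabilizer_Omega4_phase :
    Stab =
      {g : ℂ × M3R | ∃ ε₁ ε₂ ε₃ : ℝ,
        (ε₁ = 1 ∨ ε₁ = -1) ∧ (ε₂ = 1 ∨ ε₂ = -1) ∧ (ε₃ = 1 ∨ ε₃ = -1) ∧
        ε₁ * ε₂ * ε₃ = 1 ∧
        (g = (1, !![ε₁, 0, 0; 0, ε₂, 0; 0, 0, ε₃]) ∨
         g = (ω, !![0, 0, ε₁; ε₂, 0, 0; 0, ε₃, 0]) ∨
         g = (ω ^ 2, !![0, ε₁, 0; 0, 0, ε₂; ε₃, 0, 0]))} ∧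
    ∃ f : ↥Stab → ↥(alternatingGroup (Fin 4)),
      Function.Bijective f ∧
        ∀ a b c : ↥Stab, c.val = a.val * b.val → f c = f a * f b := by
  constructor
  · exact Stab_eq_S
  · -- build the equivalence P ≃ Stab
    have hmem : ∀ p, E p ∈ Stab := E_mem_Stab
    let EE : P → ↥Stab := fun p => ⟨E p, hmem p⟩
    have hEEbij : Function.Bijective EE := by
      constructor
      · intro p q h
        exact E_inj (congrArg Subtype.val h)
      · rintro ⟨g, hg⟩
        obtain ⟨p, hp⟩ := Stab_eq_range ▸ hg
        exact ⟨p, Subtype.ext hp⟩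
    let e := Equiv.ofBijective EE hEEbij
    refine ⟨ψ ∘ e.symm, Function.Bijective.comp ψ_bij e.symm.bijective, ?_⟩
    intro a b c h
    have ha : E (e.symm a) = a.val := congrArg Subtype.val (e.apply_symm_apply a)
    have hb : E (e.symm b) = b.val := congrArg Subtype.val (e.apply_symm_apply b)
    have hc : E (e.symm c) = c.val := congrArg Subtype.val (e.apply_symm_apply c)
    have : E (e.symm c) = E (pmul (e.symm a) (e.symm b)) := by
      rw [hc, h, E_mul, ha, hb]
    have hceq : e.symm c = pmul (e.symm a) (e.symm b) := E_inj this
    show ψ (e.symm c) = ψ (e.symm a) * ψ (e.symm b)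
    rw [hceq]
    exact Subtype.ext (φ_mul _ _)
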